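/- Let K be a field of characteristic not 2 (characteristic 3 is allowed), and let a₁, a₂, a₃ ∈ K be nonzero with a₁², a₂², a₃² pairwise distinct and satisfying a₁a₂ = a₂a₃ + a₃a₁. Consider the elliptic curve E: y² = (x+a₁²)(x+a₂²)(x+a₃²). Then the point P = (0, a₁a₂a₃) ∈ E(K) has order 3, and E(K) contains a subgroup isomorphic to ℤ/6ℤ ⊕ ℤ/2ℤ. -/

import Mathlib

/-- The elliptic curve `y² = (x − α₁)(x − α₂)(x − α₃)` as an affine Weierstrass curve. -/
def cubicCurve {K : Type*} [Field K] (α₁ α₂ α₃ : K) : WeierstrassCurve.Affine K :=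
  { a₁ := 0, a₂ := -(α₁ + α₂ + α₃), a₃ := 0,
    a₄ := α₁ * α₂ + α₂ * α₃ + α₃ * α₁, a₆ := -(α₁ * α₂ * α₃) }

open WeierstrassCurve.Affine WeierstrassCurve.Affine.Point

private lemma some_eq_some' {F : Type*} [Field F] {W : WeierstrassCurve.Affine F}
    {x₁ y₁ x₂ y₂ : F} (h₁ : W.Nonsingular x₁ y₁) (h₂ : W.Nonsingular x₂ y₂)
    (hx : x₁ = x₂) (hy : y₁ = y₂) :
    WeierstrassCurve.Affine.Point.some _ _ h₁ = WeierstrassCurve.Affine.Point.some _ _ h₂ := by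
  subst hx; subst hy; rfl

private lemma some_ne_some' {F : Type*} [Field F] {W : WeierstrassCurve.Affine F}
    {x₁ y₁ x₂ y₂ : F} (h₁ : W.Nonsingular x₁ y₁) (h₂ : W.Nonsingular x₂ y₂)
    (hx : x₁ ≠ x₂) :
    WeierstrassCurve.Affine.Point.some _ _ h₁ ≠ WeierstrassCurve.Affine.Point.some _ _ h₂ := by
  intro h
  injection h with hx' hy'
  exact hx hx'

open Classical in
theorem order_three_point_and_Z6_Z2 {K : Type*} [Field K] (h2 : (2 : K) ≠ 0)
    (a₁ a₂ a₃ : K) (ha₁ : a₁ ≠ 0) (ha₂ : a₂ ≠ 0) (ha₃ : a₃ ≠ 0)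
    (h12 : a₁ ^ 2 ≠ a₂ ^ 2) (h13 : a₁ ^ 2 ≠ a₃ ^ 2) (h23 : a₂ ^ 2 ≠ a₃ ^ 2)
    (hrel : a₁ * a₂ = a₂ * a₃ + a₃ * a₁) :
    ∃ hP : (cubicCurve (-(a₁ ^ 2)) (-(a₂ ^ 2)) (-(a₃ ^ 2))).Nonsingular 0 (a₁ * a₂ * a₃),
      addOrderOf (WeierstrassCurve.Affine.Point.some _ _ hP) = 3 ∧
      ∃ φ : (ZMod 6 × ZMod 2) →+ (cubicCurve (-(a₁ ^ 2)) (-(a₂ ^ 2)) (-(a₃ ^ 2))).Point,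
        Function.Injective φ := by
  set W := cubicCurve (-(a₁ ^ 2)) (-(a₂ ^ 2)) (-(a₃ ^ 2)) with hW
  set c := a₁ * a₂ * a₃ with hc
  have hcne : c ≠ 0 := mul_ne_zero (mul_ne_zero ha₁ ha₂) ha₃
  have hc2 : c ≠ -c := by
    intro h
    apply hcne
    have h2c : 2 * c = 0 := by linear_combination h
    rcases mul_eq_zero.mp h2c with h | h
    · exact absurd h h2
    · exact h
  -- curve coefficients
  have hWa₁ : W.a₁ = 0 := rfl
  have hWa₃ : W.a₃ = 0 := rfl
  have hWa₂ : W.a₂ = a₁ ^ 2 + a₂ ^ 2 + a₃ ^ 2 := by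
    show -(-(a₁ ^ 2) + -(a₂ ^ 2) + -(a₃ ^ 2)) = _; ring
  have hWa₄ : W.a₄ = a₁ ^ 2 * a₂ ^ 2 + a₂ ^ 2 * a₃ ^ 2 + a₃ ^ 2 * a₁ ^ 2 := by
    show -(a₁ ^ 2) * -(a₂ ^ 2) + -(a₂ ^ 2) * -(a₃ ^ 2) + -(a₃ ^ 2) * -(a₁ ^ 2) = _; ring
  have hWa₆ : W.a₆ = a₁ ^ 2 * a₂ ^ 2 * a₃ ^ 2 := by
    show -(-(a₁ ^ 2) * -(a₂ ^ 2) * -(a₃ ^ 2)) = _; ring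
  have key : a₃ * (a₁ + a₂) = a₁ * a₂ := by linear_combination -hrel
  have key2 : a₃ ^ 2 * (a₁ + a₂) ^ 2 = a₁ ^ 2 * a₂ ^ 2 := by
    linear_combination (a₃ * (a₁ + a₂) + a₁ * a₂) * key
  have h12' : a₁ ^ 2 - a₂ ^ 2 ≠ 0 := sub_ne_zero.mpr h12
  have h13' : a₁ ^ 2 - a₃ ^ 2 ≠ 0 := sub_ne_zero.mpr h13
  have h23' : a₂ ^ 2 - a₃ ^ 2 ≠ 0 := sub_ne_zero.mpr h23
  -- nonsingularity of P
  have hP : W.Nonsingular 0 c := by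
    rw [nonsingular_iff, equation_iff, hWa₁, hWa₂, hWa₃, hWa₄, hWa₆]
    constructor
    · rw [hc]; ring
    · right
      intro h
      exact hc2 (by linear_combination h)
  -- nonsingularity of the two-torsion points
  have hT₁ : W.Nonsingular (-(a₁ ^ 2)) 0 := by
    rw [nonsingular_iff, equation_iff, hWa₁, hWa₂, hWa₃, hWa₄, hWa₆]
    constructor
    · ring
    · left
      have hfac : (a₁ ^ 2 - a₂ ^ 2) * (a₁ ^ 2 - a₃ ^ 2) ≠ 0 := mul_ne_zero h12' h13'
      intro h
      exact hfac (by linear_combination -h)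
  have hT₂ : W.Nonsingular (-(a₂ ^ 2)) 0 := by
    rw [nonsingular_iff, equation_iff, hWa₁, hWa₂, hWa₃, hWa₄, hWa₆]
    constructor
    · ring
    · left
      have hfac : (a₂ ^ 2 - a₁ ^ 2) * (a₂ ^ 2 - a₃ ^ 2) ≠ 0 :=
        mul_ne_zero (fun hh => h12' (by linear_combination -hh)) h23'
      intro h
      exact hfac (by linear_combination -h)
  set P : W.Point := WeierstrassCurve.Affine.Point.some _ _ hP with hPdef
  set T₁ : W.Point := WeierstrassCurve.Affine.Point.some _ _ hT₁ with hT₁def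
  set T₂ : W.Point := WeierstrassCurve.Affine.Point.some _ _ hT₂ with hT₂def
  have hnegY : W.negY 0 c = -c := by rw [negY, hWa₁, hWa₃]; ring
  have hy : c ≠ W.negY 0 c := by rw [hnegY]; exact hc2
  -- the slope at P
  set L := W.slope 0 0 c c with hLdef
  have ha₄ : W.a₄ = 2 * (a₁ * a₂) * (a₁ * a₂ - a₃ ^ 2) := by
    rw [hWa₄]; linear_combination key2
  have hsq : (a₁ * a₂ - a₃ ^ 2) ^ 2 = a₃ ^ 2 * (a₁ ^ 2 + a₂ ^ 2 + a₃ ^ 2) := by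
    linear_combination -key2
  have hden : c - W.negY 0 c = 2 * c := by rw [hnegY]; ring
  have hL2 : L ^ 2 = a₁ ^ 2 + a₂ ^ 2 + a₃ ^ 2 := by
    rw [hLdef, slope_of_Y_ne rfl hy, hden, hWa₁, hWa₂, ha₄, div_pow,
      div_eq_iff (pow_ne_zero 2 (mul_ne_zero h2 hcne)), hc]
    linear_combination (4 * a₁ ^ 2 * a₂ ^ 2) * hsq
  have hx3 : W.addX 0 0 L = 0 := by
    rw [addX, hWa₁, hWa₂, hL2]; ring
  have hy3 : W.addY 0 0 c L = -c := by
    rw [addY, negAddY, hx3, negY, hWa₁, hWa₃]; ring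
  have hPP : P + P = -P := by
    rw [hPdef, add_self_of_Y_ne hy, neg_some]
    exact some_eq_some' _ _ hx3 (by rw [hy3, hnegY])
  have h3P : (3 : ℕ) • P = 0 := by
    rw [show (3 : ℕ) = 2 + 1 from rfl, add_nsmul, two_nsmul, one_nsmul, hPP, neg_add_cancel]
  have hPne : P ≠ 0 := some_ne_zero hP
  have haddP : addOrderOf P = 3 := by
    have hdvd := addOrderOf_dvd_of_nsmul_eq_zero h3P
    rcases (Nat.prime_three).eq_one_or_self_of_dvd _ hdvd with h | h
    · exact absurd (AddMonoid.addOrderOf_eq_one_iff.mp h) hPne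
    · exact h
  refine ⟨hP, haddP, ?_⟩
  -- two-torsion
  have h2T₁ : T₁ + T₁ = 0 := add_self_of_Y_eq (by rw [negY, hWa₁, hWa₃]; ring)
  have h2T₂ : T₂ + T₂ = 0 := add_self_of_Y_eq (by rw [negY, hWa₁, hWa₃]; ring)
  have h2T₁' : (2 : ℕ) • T₁ = 0 := by rw [two_nsmul, h2T₁]
  have h2T₂' : (2 : ℕ) • T₂ = 0 := by rw [two_nsmul, h2T₂]
  have h3T₁ : (3 : ℕ) • T₁ = T₁ := by
    rw [show (3 : ℕ) = 2 + 1 from rfl, add_nsmul, h2T₁', one_nsmul, zero_add]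
  have hT₁ne : T₁ ≠ 0 := some_ne_zero hT₁
  have hT₂ne : T₂ ≠ 0 := some_ne_zero hT₂
  have ha₁sq : -(a₁ ^ 2) ≠ 0 := by simpa using pow_ne_zero 2 ha₁
  have ha₂sq : -(a₂ ^ 2) ≠ 0 := by simpa using pow_ne_zero 2 ha₂
  have hT₁T₂ : T₁ ≠ T₂ := some_ne_some' _ _ (fun h => h12 (by linear_combination -h))
  -- the order six point
  set Q : W.Point := P + T₁ with hQdef
  have hQne : Q ≠ 0 := by
    intro h
    have hPT : P = -T₁ := eq_neg_of_add_eq_zero_left h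
    rw [hPdef, hT₁def, neg_some] at hPT
    exact some_ne_some' _ _ (fun hh => ha₁sq hh.symm) hPT
  have h2Q : (2 : ℕ) • Q = -P := by
    rw [hQdef, smul_add, h2T₁', add_zero, two_nsmul, hPP]
  have h3Q : (3 : ℕ) • Q = T₁ := by
    rw [hQdef, smul_add, h3P, h3T₁, zero_add]
  have h6Q : (6 : ℕ) • Q = 0 := by
    rw [show (6 : ℕ) = 3 + 3 from rfl, add_nsmul, h3Q, h2T₁]
  have h2Qne : (2 : ℕ) • Q ≠ 0 := by
    rw [h2Q]; simpa using hPne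
  have h3Qne : (3 : ℕ) • Q ≠ 0 := by rw [h3Q]; exact hT₁ne
  have haddQ : addOrderOf Q = 6 := by
    have hdvd := addOrderOf_dvd_of_nsmul_eq_zero h6Q
    have h1 : 1 ≤ addOrderOf Q := Nat.pos_of_dvd_of_pos hdvd (by norm_num)
    have h6 : addOrderOf Q ≤ 6 := Nat.le_of_dvd (by norm_num) hdvd
    interval_cases h : addOrderOf Q
    · exact absurd (AddMonoid.addOrderOf_eq_one_iff.mp h) hQne
    · exact absurd (h ▸ addOrderOf_nsmul_eq_zero Q) h2Qne
    · exact absurd (h ▸ addOrderOf_nsmul_eq_zero Q) h3Qne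
    · norm_num at hdvd
    · norm_num at hdvd
    · rfl
  -- build the homomorphism
  have h6Qz : (zmultiplesHom W.Point Q) ((6 : ℕ) : ℤ) = 0 := by
    simp only [zmultiplesHom_apply, natCast_zsmul]
    exact h6Q
  have h2T₂z : (zmultiplesHom W.Point T₂) ((2 : ℕ) : ℤ) = 0 := by
    simp only [zmultiplesHom_apply, natCast_zsmul]
    exact h2T₂'
  set f : ZMod 6 →+ W.Point := ZMod.lift 6 ⟨zmultiplesHom W.Point Q, h6Qz⟩ with hfdef
  set g : ZMod 2 →+ W.Point := ZMod.lift 2 ⟨zmultiplesHom W.Point T₂, h2T₂z⟩ with hgdef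
  refine ⟨f.coprod g, ?_⟩
  rw [injective_iff_map_eq_zero]
  rintro ⟨m, n⟩ h
  rw [AddMonoidHom.coprod_apply] at h
  have hm : ((m.val : ℤ) : ZMod 6) = m := by
    push_cast
    rw [ZMod.natCast_val, ZMod.cast_id]
  have hn : ((n.val : ℤ) : ZMod 2) = n := by
    push_cast
    rw [ZMod.natCast_val, ZMod.cast_id]
  have hfm : f m = m.val • Q := by
    conv_lhs => rw [← hm]
    rw [hfdef, ZMod.lift_coe]
    simp only [zmultiplesHom_apply, natCast_zsmul]
  have hgn : g n = n.val • T₂ := by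
    conv_lhs => rw [← hn]
    rw [hgdef, ZMod.lift_coe]
    simp only [zmultiplesHom_apply, natCast_zsmul]
  rw [hfm, hgn] at h
  have hmval : m.val < 6 := ZMod.val_lt m
  have hnval : n.val < 2 := ZMod.val_lt n
  have hzero : m.val = 0 ∧ n.val = 0 := by
    interval_cases hnv : n.val
    · refine ⟨?_, rfl⟩
      rw [zero_smul, add_zero] at h
      have := addOrderOf_dvd_of_nsmul_eq_zero h
      rw [haddQ] at this
      omega
    · exfalso
      rw [one_smul] at h
      have hkT : m.val • Q = T₂ := by
        have := eq_neg_of_add_eq_zero_left h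
        rwa [neg_eq_of_add_eq_zero_left h2T₂] at this
      have h2k : (2 * m.val) • Q = 0 := by
        rw [mul_comm, mul_nsmul, hkT, h2T₂']
      have hdvd2k := addOrderOf_dvd_of_nsmul_eq_zero h2k
      rw [haddQ] at hdvd2k
      have : m.val = 0 ∨ m.val = 3 := by omega
      rcases this with h0 | h3
      · rw [h0, zero_smul] at hkT
        exact hT₂ne hkT.symm
      · rw [h3, h3Q] at hkT
        exact hT₁T₂ hkT
  have hm0 : m = 0 := by rw [← hm, hzero.1]; simp
  have hn0 : n = 0 := by rw [← hn, hzero.2]; simp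
  rw [hm0, hn0]
  rfl
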